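/- Let t be a finite binary word, k ≥ 1, and let w be the infinite binary word w = t μ^k(t) μ^{2k}(t) μ^{3k}(t)…, i.e., the unique infinite word satisfying w = t·μ^k(w). Then w is 2-automatic. -/

import Mathlib

/-- Thue–Morse morphism on finite binary words: 0 ↦ 01, 1 ↦ 10 (0 = false, 1 = true). -/
def mu (w : List Bool) : List Bool := w.flatMap (fun b => [b, !b])

/-- Thue–Morse morphism on right-infinite binary words. -/
def muI (x : ℕ → Bool) : ℕ → Bool := fun n => if n % 2 = 0 then x (n / 2) else !(x (n / 2))

/-- Prepend a finite word to an infinite word. -/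
def appendInf (u : List Bool) (x : ℕ → Bool) : ℕ → Bool :=
  fun n => if h : n < u.length then u.get ⟨n, h⟩ else x (n - u.length)

/-- `w` is a prefix of the infinite word `x`. -/
def InfPrefix (w : List Bool) (x : ℕ → Bool) : Prop :=
  ∀ i (h : i < w.length), w.get ⟨i, h⟩ = x i

/-- The finite word `w` is `p`-periodic. -/
def ListPeriodic (w : List Bool) (p : ℕ) : Prop :=
  ∀ i, i + p < w.length → w.getD i false = w.getD (i + p) false

/-- `w` occurs as a factor of the infinite word `x`. -/
def IsFactor (x : ℕ → Bool) (w : List Bool) : Prop :=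
  ∃ i, ∀ k (h : k < w.length), w.get ⟨k, h⟩ = x (i + k)

/-- `w` has exponent ≥ β : it has a period `p ≥ 1` with `|w| ≥ β·p`. -/
def HasExpGE (w : List Bool) (β : ℚ) : Prop :=
  ∃ p, 1 ≤ p ∧ ListPeriodic w p ∧ β * p ≤ (w.length : ℚ)

/-- `w` has exponent > β. -/
def HasExpGT (w : List Bool) (β : ℚ) : Prop :=
  ∃ p, 1 ≤ p ∧ ListPeriodic w p ∧ β * p < (w.length : ℚ)

/-- The infinite word `x` is β-power-free: no factor has exponent ≥ β. -/
def FreeI (x : ℕ → Bool) (β : ℚ) : Prop := ∀ w, IsFactor x w → ¬ HasExpGE w β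

/-- The infinite word `x` is β⁺-power-free: no factor has exponent > β. -/
def FreePlusI (x : ℕ → Bool) (β : ℚ) : Prop := ∀ w, IsFactor x w → ¬ HasExpGT w β

/-- The finite word `x` is β-power-free. -/
def FreeL (x : List Bool) (β : ℚ) : Prop := ∀ w, w <:+: x → ¬ HasExpGE w β

/-- The finite word `x` is β⁺-power-free. -/
def FreeLPlus (x : List Bool) (β : ℚ) : Prop := ∀ w, w <:+: x → ¬ HasExpGT w β

/-- The infinite word `x` is 7/3-power-free. -/
def Free73 (x : ℕ → Bool) : Prop := FreeI x (7/3)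

/-- The prefix of length `n` of the infinite word `x` is `p`-periodic. -/
def PrefPeriodic (x : ℕ → Bool) (p n : ℕ) : Prop := ∀ i, i + p < n → x i = x (i + p)

/-- The set {ε, 0, 00, 1, 11}. -/
def P5 : Set (List Bool) :=
  {[], [false], [false, false], [true], [true, true]}

/-- Thue–Morse word: parity of the number of ones in base 2. -/
def tmWord (n : ℕ) : Bool := (Nat.digits 2 n).sum % 2 == 1

/-- Lexicographic order (0 < 1) on infinite binary words. -/
def LexLE (u v : ℕ → Bool) : Prop :=
  u = v ∨ ∃ n, (∀ k < n, u k = v k) ∧ u n = false ∧ v n = true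

/-- The 2-kernel of an infinite word. -/
def Kernel2 (x : ℕ → Bool) : Set (ℕ → Bool) :=
  {y | ∃ i j, j < 2 ^ i ∧ y = fun n => x (2 ^ i * n + j)}

/-- An infinite word is 2-automatic iff its 2-kernel is finite. -/
def TwoAutomatic (x : ℕ → Bool) : Prop := (Kernel2 x).Finite

def Ls (L q : ℕ) : ℕ → ℕ
  | 0 => 0
  | s + 1 => L + q * Ls L q s

lemma tm_bin (a : ℕ) : tmWord a = xor (decide (a % 2 = 1)) (tmWord (a / 2)) := by
  rcases Nat.eq_zero_or_pos a with h | h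
  · subst h; simp [tmWord]
  · unfold tmWord
    rw [Nat.digits_def' (by norm_num : 1 < 2) h, List.sum_cons]
    rcases Nat.mod_two_eq_zero_or_one a with h2 | h2 <;>
    rcases Nat.mod_two_eq_zero_or_one ((Nat.digits 2 (a / 2)).sum) with h3 | h3 <;>
      simp [h2, Nat.add_mod, h3]

lemma tm_split (d a : ℕ) : tmWord a = xor (tmWord (a % 2^d)) (tmWord (a / 2^d)) := by
  induction d generalizing a with
  | zero => simp [tmWord, Nat.mod_one]
  | succ d ih =>
    have h1 : a % 2^(d+1) % 2 = a % 2 := Nat.mod_mod_of_dvd a ⟨2^d, by rw [pow_succ]; ring⟩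
    have h2 : a % 2^(d+1) / 2 = a / 2 % 2^d := by
      rw [← Nat.mod_mul_right_div_self, pow_succ']
    rw [tm_bin a, ih (a/2), tm_bin (a % 2^(d+1)), h1, h2,
        Nat.div_div_eq_div_mul, ← pow_succ']
    cases (decide (a % 2 = 1)) <;> cases tmWord (a / 2 % 2 ^ d) <;>
      cases tmWord (a / 2 ^ (d+1)) <;> simp

lemma muI_iter (m : ℕ) (x : ℕ → Bool) (n : ℕ) :
    muI^[m] x n = xor (tmWord (n % 2^m)) (x (n / 2^m)) := by
  induction m generalizing n with
  | zero => simp [tmWord, Nat.mod_one]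
  | succ m ih =>
    rw [Function.iterate_succ_apply']
    show (if n % 2 = 0 then (muI^[m] x) (n/2) else !((muI^[m] x) (n/2)))
      = xor (tmWord (n % 2^(m+1))) (x (n / 2^(m+1)))
    have h1 : n % 2^(m+1) % 2 = n % 2 := Nat.mod_mod_of_dvd n ⟨2^m, by rw [pow_succ]; ring⟩
    have h2 : n % 2^(m+1) / 2 = n / 2 % 2^m := by
      rw [← Nat.mod_mul_right_div_self, pow_succ']
    have h3 : n / 2 / 2^m = n / 2^(m+1) := by rw [Nat.div_div_eq_div_mul, ← pow_succ']
    rw [ih (n/2), tm_bin (n % 2^(m+1)), h1, h2, h3]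
    rcases Nat.mod_two_eq_zero_or_one n with h | h <;>
      rw [h] <;> cases tmWord (n / 2 % 2^m) <;> cases x (n / 2^(m+1)) <;> simp


lemma mainA (t : List Bool) (k : ℕ) (w : ℕ → Bool)
    (hw : w = appendInf t (muI^[k] w)) (s : ℕ) :
    ∀ M, Ls t.length (2^k) s ≤ M →
      xor (tmWord (M - Ls t.length (2^k) s)) (w M)
        = xor (tmWord ((M - Ls t.length (2^k) s) / (2^k)^s))
            (w ((M - Ls t.length (2^k) s) / (2^k)^s)) := by
  induction s with
  | zero => intro M _; simp [Ls]
  | succ s ih =>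
    intro M hM
    have hq : 0 < 2^k := Nat.two_pow_pos k
    have hM' : t.length + 2^k * Ls t.length (2^k) s ≤ M := hM
    have hLM : t.length ≤ M := le_trans (Nat.le_add_right _ _) hM'
    have hbase : w M = xor (tmWord ((M - t.length) % 2^k)) (w ((M - t.length) / 2^k)) := by
      conv_lhs => rw [hw]
      simp only [appendInf]
      rw [dif_neg (not_lt.mpr hLM)]
      exact muI_iter k w (M - t.length)
    set L := t.length with hL
    set A := Ls L (2^k) s with hA
    set N := (M - L) / 2^k with hN
    set r := (M - L) % 2^k with hr
    have hrlt : r < 2^k := Nat.mod_lt _ hq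
    have hNr : 2^k * N + r = M - L := by rw [hN, hr]; exact Nat.div_add_mod _ _
    have hNA : A ≤ N := by
      by_contra hcon
      push_neg at hcon
      have h2 : 2^k * N + 2^k ≤ 2^k * A := by
        have h3 : N + 1 ≤ A := hcon
        calc 2^k * N + 2^k = 2^k * (N+1) := by ring
        _ ≤ 2^k * A := Nat.mul_le_mul_left _ h3
      omega
    have hXeq : M - (L + 2^k * A) = 2^k * (N - A) + r := by
      have h1 : 2^k * (N - A) + 2^k * A = 2^k * N := by
        rw [← Nat.mul_add, Nat.sub_add_cancel hNA]
      omega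
    have hXdiv : (M - (L + 2^k*A)) / 2^k = N - A := by
      rw [hXeq, Nat.mul_add_div hq, Nat.div_eq_of_lt hrlt, Nat.add_zero]
    have hXmod : (M - (L + 2^k*A)) % 2^k = r := by
      rw [hXeq, Nat.mul_add_mod, Nat.mod_eq_of_lt hrlt]
    have ihN := ih N hNA
    have hLs1 : Ls L (2^k) (s+1) = L + 2^k * A := rfl
    have hXd2 : (M - Ls L (2^k) (s+1)) / (2^k)^(s+1) = (N - A) / (2^k)^s := by
      rw [hLs1, pow_succ', ← Nat.div_div_eq_div_mul, hXdiv]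
    have hts := tm_split k (M - (L + 2^k*A))
    rw [hXmod, hXdiv] at hts
    rw [hXd2, hLs1, hts, hbase, ← ihN]
    cases tmWord r <;> cases tmWord (N - A) <;> cases w N <;> simp

lemma Ls_le (L qm : ℕ) : ∀ s, Ls L (qm+1) s * qm + L = L * (qm+1)^s := by
  intro s; induction s with
  | zero => simp [Ls]
  | succ s ih =>
    show (L + (qm+1) * Ls L (qm+1) s) * qm + L = L * (qm+1)^(s+1)
    have h : (L + (qm+1) * Ls L (qm+1) s) * qm + L
        = (qm+1) * (Ls L (qm+1) s * qm + L) := by ring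
    rw [h, ih, pow_succ]; ring


theorem stmt19 (t : List Bool) (k : ℕ) (hk : 1 ≤ k) (w : ℕ → Bool)
    (hw : w = appendInf t (muI^[k] w)) : TwoAutomatic w := by
  classical
  set L := t.length with hLdef
  set c₀ := Nat.log 2 L + 1 with hc
  set K := c₀ + k with hKdef
  apply Set.Finite.subset (Set.finite_range
    (fun p : Bool × Bool × Fin (K+1) × Fin (2^(K+1)) => fun n : ℕ =>
      match n with
      | 0 => p.1
      | Nat.succ m => xor p.2.1 (w (2 ^ (p.2.2.1 : ℕ) * m + (p.2.2.2 : ℕ)))))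
  rintro y ⟨i, j, hj, rfl⟩
  set s := (i - c₀) / k with hs
  have hks : k * s ≤ i - c₀ := by rw [hs, mul_comm]; exact Nat.div_mul_le_self _ _
  have hks' : k * s ≤ i := le_trans hks (Nat.sub_le _ _)
  set i' := i - k * s with hi'
  have hdm : k * s + (i - c₀) % k = i - c₀ := by rw [hs]; exact Nat.div_add_mod _ _
  have hmodk : (i - c₀) % k < k := Nat.mod_lt _ (by omega)
  have hi'K : i' ≤ K := by omega
  have hLc : L < 2^c₀ := by rw [hc]; exact Nat.lt_pow_succ_log_self (by norm_num) L
  obtain ⟨qm, hqm⟩ : ∃ qm, 2^k = qm + 1 := ⟨2^k - 1, by have := Nat.two_pow_pos k; omega⟩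
  have hqm1 : 1 ≤ qm := by
    have h2 : 2 ≤ 2^k := by
      calc 2 = 2^1 := rfl
      _ ≤ 2^k := Nat.pow_le_pow_right (by norm_num) hk
    omega
  have hLsle : Ls L (2^k) s ≤ L * 2^(k*s) := by
    have h1 := Ls_le L qm s
    rw [← hqm] at h1
    have h2 : Ls L (2^k) s ≤ Ls L (2^k) s * qm := Nat.le_mul_of_pos_right _ hqm1
    rw [pow_mul]
    omega
  have hLs2 : Ls L (2^k) s ≤ 2^i := by
    rcases Nat.lt_or_ge i c₀ with h | h
    · have hs0 : s = 0 := by rw [hs, Nat.sub_eq_zero_of_le (le_of_lt h)]; simp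
      rw [hs0]
      show Ls L (2^k) 0 ≤ 2^i
      rw [show Ls L (2^k) 0 = 0 from rfl]
      exact Nat.zero_le _
    · calc Ls L (2^k) s ≤ L * 2^(k*s) := hLsle
        _ ≤ (2^c₀ - 1) * 2^(k*s) := Nat.mul_le_mul_right _ (by omega)
        _ = 2^c₀ * 2^(k*s) - 2^(k*s) := by rw [Nat.sub_mul, one_mul]
        _ ≤ 2^(c₀ + k*s) := by rw [pow_add 2 c₀ (k*s)]; exact Nat.sub_le _ _
        _ ≤ 2^i := Nat.pow_le_pow_right (by norm_num) (by omega)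
  set E := 2^i + j - Ls L (2^k) s with hE
  set e := E / 2^(k*s) with he
  set f := E % 2^(k*s) with hf
  have h2i1 : 2^(i+1) = 2^i + 2^i := by rw [pow_succ]; ring
  have hE2 : E < 2^(i+1) := by omega
  have hee : e < 2^(i'+1) := by
    have hsplit : 2^(i+1) = 2^(k*s) * 2^(i'+1) := by rw [← pow_add]; congr 1; omega
    rw [he]
    exact Nat.div_lt_of_lt_mul (by omega)
  have heK : e < 2^(K+1) := lt_of_lt_of_le hee (Nat.pow_le_pow_right (by norm_num) (by omega))
  refine ⟨⟨w j, tmWord f, ⟨i', by omega⟩, ⟨e, heK⟩⟩, ?_⟩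
  funext n
  cases n with
  | zero =>
    show w j = w (2^i * 0 + j)
    rw [Nat.mul_zero, Nat.zero_add]
  | succ m =>
    show xor (tmWord f) (w (2^i' * m + e)) = w (2^i * (m+1) + j)
    have hMge : Ls L (2^k) s ≤ 2^i * (m+1) + j := by
      have h1 : 2^i ≤ 2^i * (m+1) := Nat.le_mul_of_pos_right _ (Nat.succ_pos m)
      omega
    have key := mainA t k w hw s (2^i*(m+1)+j) hMge
    have hpows : (2^k)^s = 2^(k*s) := by rw [← pow_mul]
    have hmul : 2^(k*s) * (2^i' * m) = 2^i * m := by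
      rw [← mul_assoc, ← pow_add]
      congr 2
      omega
    have hmm : 2^i * (m+1) = 2^i * m + 2^i := by ring
    have hXeq : 2^i*(m+1) + j - Ls L (2^k) s = 2^(k*s) * (2^i' * m) + E := by omega
    have hdiv : (2^i*(m+1) + j - Ls L (2^k) s) / (2^k)^s = 2^i' * m + e := by
      rw [hXeq, hpows, Nat.mul_add_div (Nat.two_pow_pos _), he]
    have hmod : (2^i*(m+1) + j - Ls L (2^k) s) % 2^(k*s) = f := by
      rw [hXeq, Nat.mul_add_mod, hf]
    have hts := tm_split (k*s) (2^i*(m+1) + j - Ls L (2^k) s)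
    rw [hmod] at hts
    have hdiv' : (2^i*(m+1) + j - Ls L (2^k) s) / 2^(k*s) = 2^i' * m + e := by
      rw [← hpows]; exact hdiv
    rw [hdiv'] at hts
    rw [hdiv, hts] at key
    revert key
    cases tmWord f <;> cases tmWord (2^i' * m + e) <;>
      cases w (2^i*(m+1)+j) <;> cases w (2^i' * m + e) <;> simp
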